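/- Let m ≥ 3, 2 ≤ k ≤ m, and 0 ≤ σ ≤ δ. There exists a constant C such that ‖f·g‖_{k,δ} ≤ C·‖f‖_{m,δ}·‖g‖_{k,σ} for all f ∈ H^{m,δ}(ℝ⁺×S¹) and g ∈ H^{k,σ}(ℝ⁺×S¹), where ‖f‖²_{k,δ} = Σ_{|α|≤k} ∫ |D^α f(s,t)|² e^{2δs} ds dt. -/

import Mathlib

open Filter MeasureTheory

open Set

set_option maxHeartbeats 2000000

noncomputable section

lemma cs_unit (a : ℝ) (φ : ℝ → ℝ) (hc : ContinuousOn φ (Set.Icc a (a+1))) :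
    (∫ x in a..(a+1), φ x) ^ 2 ≤ ∫ x in a..(a+1), (φ x) ^ 2 := by
  have hab : a ≤ a + 1 := by linarith
  have huIcc : Set.uIcc a (a+1) = Set.Icc a (a+1) := Set.uIcc_of_le hab
  have hc' : ContinuousOn φ (Set.uIcc a (a+1)) := huIcc ▸ hc
  have hint : IntervalIntegrable φ volume a (a+1) := hc'.intervalIntegrable
  have hint2 : IntervalIntegrable (fun x => (φ x)^2) volume a (a+1) :=
    (hc'.pow 2).intervalIntegrable
  set c := ∫ x in a..(a+1), φ x with hc_def
  have h0 : 0 ≤ ∫ x in a..(a+1), (φ x - c)^2 :=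
    intervalIntegral.integral_nonneg hab (fun x _ => sq_nonneg _)
  have hexp : (∫ x in a..(a+1), (φ x - c)^2)
      = (∫ x in a..(a+1), (φ x)^2) - 2*c*c + c^2 := by
    have e1 : (fun x => (φ x - c)^2) = fun x => ((φ x)^2 - (2*c)*φ x + c^2) := by
      funext x; ring
    rw [e1]
    rw [intervalIntegral.integral_add ((hint2.sub (hint.const_mul (2*c)))) intervalIntegrable_const,
      intervalIntegral.integral_sub hint2 (hint.const_mul (2*c)),
      intervalIntegral.integral_const_mul, intervalIntegral.integral_const]
    simp [hc_def]
  nlinarith [h0, hexp]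

lemma agmon1d {E : Type*} [NormedAddCommGroup E] [NormedSpace ℝ E] [CompleteSpace E]
    (a : ℝ) (u u' : ℝ → E)
    (hu : ∀ x ∈ Set.Icc a (a+1), HasDerivAt u (u' x) x)
    (hc : ContinuousOn u' (Set.Icc a (a+1))) :
    ‖u a‖^2 ≤ 2 * (∫ x in a..(a+1), ‖u x‖^2) + 2 * ∫ x in a..(a+1), ‖u' x‖^2 := by
  have hab : a ≤ a + 1 := by linarith
  have huIcc : Set.uIcc a (a+1) = Set.Icc a (a+1) := Set.uIcc_of_le hab
  have hucont : ContinuousOn u (Set.Icc a (a+1)) :=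
    fun x hx => (hu x hx).continuousAt.continuousWithinAt
  obtain ⟨y, hy, hmin⟩ := isCompact_Icc.exists_isMinOn (Set.nonempty_Icc.2 hab)
    (continuous_norm.comp_continuousOn hucont)
  have hyIcc : Set.uIcc y a ⊆ Set.Icc a (a+1) := by
    rw [Set.uIcc_of_ge hy.1]
    exact Set.Icc_subset_Icc le_rfl hy.2
  have hFTC : ∫ x in y..a, u' x = u a - u y :=
    intervalIntegral.integral_eq_sub_of_hasDerivAt
      (fun x hx => hu x (hyIcc hx))
      ((hc.mono hyIcc).intervalIntegrable)
  have hcn : ContinuousOn (fun x => ‖u' x‖) (Set.uIcc a (a+1)) :=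
    (continuous_norm.comp_continuousOn hc).mono huIcc.subset
  have hnorm : ‖u a - u y‖ ≤ ∫ x in a..(a+1), ‖u' x‖ := by
    rw [← hFTC]
    refine le_trans intervalIntegral.norm_integral_le_abs_integral_norm ?_
    have hnn : 0 ≤ ∫ x in a..y, ‖u' x‖ :=
      intervalIntegral.integral_nonneg hy.1 (fun x _ => norm_nonneg _)
    have hmono : (∫ x in a..y, ‖u' x‖) ≤ ∫ x in a..(a+1), ‖u' x‖ :=
      intervalIntegral.integral_mono_interval le_rfl hy.1 hy.2
        (Filter.Eventually.of_forall (fun x => norm_nonneg _)) hcn.intervalIntegrable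
    calc |∫ x in y..a, ‖u' x‖| = |∫ x in a..y, ‖u' x‖| := by
          rw [intervalIntegral.integral_symm a y, abs_neg]
      _ = ∫ x in a..y, ‖u' x‖ := abs_of_nonneg hnn
      _ ≤ _ := hmono
  have hBnn : 0 ≤ ∫ x in a..(a+1), ‖u' x‖ :=
    intervalIntegral.integral_nonneg hab (fun _ _ => norm_nonneg _)
  have hA : ‖u y‖^2 ≤ ∫ x in a..(a+1), ‖u x‖^2 := by
    have hconst : (∫ (_ : ℝ) in a..(a+1), ‖u y‖^2) = ‖u y‖^2 := by
      rw [intervalIntegral.integral_const]; simp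
    rw [← hconst]
    refine intervalIntegral.integral_mono_on hab intervalIntegrable_const
      ((((continuous_norm.comp_continuousOn hucont).pow 2).mono huIcc.subset).intervalIntegrable) ?_
    intro x hx
    exact pow_le_pow_left₀ (norm_nonneg _) (hmin hx) 2
  have hB2 : (∫ x in a..(a+1), ‖u' x‖)^2 ≤ ∫ x in a..(a+1), ‖u' x‖^2 :=
    cs_unit a _ (continuous_norm.comp_continuousOn hc)
  have htri : ‖u a‖ ≤ ‖u y‖ + ∫ x in a..(a+1), ‖u' x‖ := by
    have : ‖u a‖ = ‖u y + (u a - u y)‖ := by rw [add_sub_cancel]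
    rw [this]
    exact le_trans (norm_add_le _ _) (by linarith [hnorm])
  nlinarith [htri, hA, hB2, hBnn, norm_nonneg (u a), norm_nonneg (u y),
    sq_nonneg (‖u y‖ - ∫ x in a..(a+1), ‖u' x‖)]

lemma hasDerivAt_slice1 {E : Type*} [NormedAddCommGroup E] [NormedSpace ℝ E]
    {h : ℝ × ℝ → E} (hd : Differentiable ℝ h) (t σ : ℝ) :
    HasDerivAt (fun x => h (x, t)) (fderiv ℝ h (σ, t) ((1:ℝ), (0:ℝ))) σ := by
  have h1 : HasDerivAt (fun x : ℝ => (x, t)) ((1:ℝ), (0:ℝ)) σ :=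
    (hasDerivAt_id σ).prodMk (hasDerivAt_const σ t)
  have h2 := ((hd (σ, t)).hasFDerivAt).comp_hasDerivAt σ h1
  simpa [Function.comp_def] using h2

lemma hasDerivAt_slice2 {E : Type*} [NormedAddCommGroup E] [NormedSpace ℝ E]
    {h : ℝ × ℝ → E} (hd : Differentiable ℝ h) (σ τ : ℝ) :
    HasDerivAt (fun x => h (σ, x)) (fderiv ℝ h (σ, τ) ((0:ℝ), (1:ℝ))) τ := by
  have h1 : HasDerivAt (fun x : ℝ => (σ, x)) ((0:ℝ), (1:ℝ)) τ :=
    (hasDerivAt_const τ σ).prodMk (hasDerivAt_id τ)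
  have h2 := ((hd (σ, τ)).hasFDerivAt).comp_hasDerivAt τ h1
  simpa [Function.comp_def] using h2

lemma fderiv_periodic {E F : Type*} [NormedAddCommGroup E] [NormedSpace ℝ E]
    [NormedAddCommGroup F] [NormedSpace ℝ F]
    {H : E → F} (hH : Differentiable ℝ H) (c : E) (hper : ∀ x, H (x + c) = H x)
    (x : E) : fderiv ℝ H (x + c) = fderiv ℝ H x := by
  have htr : HasFDerivAt (fun y : E => y + c) (ContinuousLinearMap.id ℝ E) x :=
    (hasFDerivAt_id x).add_const c
  have hcomp := HasFDerivAt.comp x ((hH (x + c)).hasFDerivAt) htr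
  have heq : (H ∘ fun y : E => y + c) = H := funext fun y => hper y
  rw [heq] at hcomp
  have h2 := hcomp.fderiv
  rw [ContinuousLinearMap.comp_id] at h2
  exact h2.symm

lemma itfd_periodic (n : ℕ) (g : ℝ × ℝ → ℝ) (hg : ContDiff ℝ (n : ℕ∞) g)
    (per : ∀ s t : ℝ, g (s, t + 1) = g (s, t)) :
    ∀ j, j ≤ n → ∀ x : ℝ × ℝ,
      iteratedFDeriv ℝ j g (x + ((0:ℝ), (1:ℝ))) = iteratedFDeriv ℝ j g x := by
  have hper0 : ∀ x : ℝ × ℝ, g (x + ((0:ℝ), (1:ℝ))) = g x := by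
    intro x
    have hx : x + ((0:ℝ), (1:ℝ)) = (x.1, x.2 + 1) := by
      ext <;> simp
    rw [hx]
    simpa using per x.1 x.2
  intro j
  induction j with
  | zero =>
      intro _ x
      rw [iteratedFDeriv_zero_eq_comp]
      simp [hper0 x]
  | succ j ih =>
      intro hj x
      have hdiff : Differentiable ℝ (iteratedFDeriv ℝ j g) :=
        hg.differentiable_iteratedFDeriv (Nat.cast_lt.mpr (by omega))
      have hper' : ∀ y : ℝ × ℝ,
          iteratedFDeriv ℝ j g (y + ((0:ℝ), (1:ℝ))) = iteratedFDeriv ℝ j g y :=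
        ih (by omega)
      rw [iteratedFDeriv_succ_eq_comp_left, Function.comp_apply, Function.comp_apply,
        fderiv_periodic hdiff ((0:ℝ), (1:ℝ)) hper' x]

lemma norm_itfd_succ (g : ℝ × ℝ → ℝ) (l : ℕ) (x : ℝ × ℝ) :
    ‖iteratedFDeriv ℝ (l + 1) g x‖ = ‖fderiv ℝ (iteratedFDeriv ℝ l g) x‖ := by
  rw [iteratedFDeriv_succ_eq_comp_left, Function.comp_apply, LinearIsometryEquiv.norm_map]

lemma hkey (g : ℝ × ℝ → ℝ) (j : ℕ) : fderiv ℝ (iteratedFDeriv ℝ j g) = fun x =>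
    (continuousMultilinearCurryLeftEquiv ℝ (fun _ : Fin (j+1) => ℝ × ℝ) ℝ)
      (iteratedFDeriv ℝ (j+1) g x) := by
  funext x
  have h := congrFun (iteratedFDeriv_succ_eq_comp_left (𝕜:=ℝ) (f:=g) (n:=j)) x
  rw [Function.comp_apply] at h
  rw [h]
  simp

lemma sup_bound (n l : ℕ) (hl : l + 2 ≤ n) (d : ℝ) (hd : 0 ≤ d)
    (g : ℝ × ℝ → ℝ) (hg : ContDiff ℝ (n : ℕ∞) g)
    (per : ∀ s t : ℝ, g (s, t + 1) = g (s, t))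
    (hint : ∀ j, j ≤ n → IntegrableOn
      (fun x : ℝ × ℝ => ‖iteratedFDeriv ℝ j g x‖ ^ 2 * Real.exp (2 * d * x.1))
      (Set.Ioi (0:ℝ) ×ˢ Set.Ioo (0:ℝ) 1) volume)
    (s t : ℝ) (hs : 0 < s) :
    ‖iteratedFDeriv ℝ l g (s, t)‖ ^ 2 * Real.exp (2 * d * s) ≤
      8 * ∑ j ∈ Finset.range (n + 1), ∫ x in Set.Ioi (0:ℝ) ×ˢ Set.Ioo (0:ℝ) 1,
        ‖iteratedFDeriv ℝ j g x‖ ^ 2 * Real.exp (2 * d * x.1) := by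
  have hcG0 : Continuous (iteratedFDeriv ℝ l g) :=
    ContDiff.continuous_iteratedFDeriv (Nat.cast_le.mpr (by omega)) hg
  have hcG1 : Continuous (iteratedFDeriv ℝ (l+1) g) :=
    ContDiff.continuous_iteratedFDeriv (Nat.cast_le.mpr (by omega)) hg
  have hcG2 : Continuous (iteratedFDeriv ℝ (l+2) g) :=
    ContDiff.continuous_iteratedFDeriv (Nat.cast_le.mpr (by omega)) hg
  have hdG0 : Differentiable ℝ (iteratedFDeriv ℝ l g) :=
    hg.differentiable_iteratedFDeriv (Nat.cast_lt.mpr (by omega))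
  have hdG1 : Differentiable ℝ (iteratedFDeriv ℝ (l+1) g) :=
    hg.differentiable_iteratedFDeriv (Nat.cast_lt.mpr (by omega))
  have hnF1 : ∀ x, ‖fderiv ℝ (iteratedFDeriv ℝ l g) x‖ = ‖iteratedFDeriv ℝ (l+1) g x‖ :=
    fun x => (norm_itfd_succ g l x).symm
  have hnF2 : ∀ x, ‖fderiv ℝ (iteratedFDeriv ℝ (l+1) g) x‖ = ‖iteratedFDeriv ℝ (l+2) g x‖ :=
    fun x => (norm_itfd_succ g (l+1) x).symm
  have hcF1 : Continuous (fderiv ℝ (iteratedFDeriv ℝ l g)) := by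
    rw [hkey g l]
    exact (continuousMultilinearCurryLeftEquiv ℝ (fun _ : Fin (l+1) => ℝ × ℝ) ℝ).continuous.comp hcG1
  have hcF2 : Continuous (fderiv ℝ (iteratedFDeriv ℝ (l+1) g)) := by
    rw [hkey g (l+1)]
    exact (continuousMultilinearCurryLeftEquiv ℝ (fun _ : Fin (l+2) => ℝ × ℝ) ℝ).continuous.comp hcG2
  have hperG : ∀ j, j ≤ n → ∀ σ τ : ℝ,
      iteratedFDeriv ℝ j g (σ, τ + 1) = iteratedFDeriv ℝ j g (σ, τ) := by
    intro j hj σ τ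
    have h := itfd_periodic n g hg per j hj (σ, τ)
    have hx : (σ, τ) + ((0:ℝ),(1:ℝ)) = (σ, τ+1) := by ext <;> simp
    rwa [hx] at h
  -- norms of (0,1) and (1,0)
  have hn01 : ‖((0:ℝ),(1:ℝ))‖ = 1 := by simp [Prod.norm_def]
  have hn10 : ‖((1:ℝ),(0:ℝ))‖ = 1 := by simp [Prod.norm_def]
  have hb0 : ∀ x : ℝ × ℝ, ‖fderiv ℝ (iteratedFDeriv ℝ l g) x ((0:ℝ),(1:ℝ))‖^2
      ≤ ‖iteratedFDeriv ℝ (l+1) g x‖^2 := by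
    intro x
    have h := (fderiv ℝ (iteratedFDeriv ℝ l g) x).le_opNorm ((0:ℝ),(1:ℝ))
    rw [hn01, mul_one, hnF1 x] at h
    exact pow_le_pow_left₀ (norm_nonneg _) h 2
  have hb0' : ∀ x : ℝ × ℝ, ‖fderiv ℝ (iteratedFDeriv ℝ l g) x ((1:ℝ),(0:ℝ))‖^2
      ≤ ‖iteratedFDeriv ℝ (l+1) g x‖^2 := by
    intro x
    have h := (fderiv ℝ (iteratedFDeriv ℝ l g) x).le_opNorm ((1:ℝ),(0:ℝ))
    rw [hn10, mul_one, hnF1 x] at h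
    exact pow_le_pow_left₀ (norm_nonneg _) h 2
  have hb1 : ∀ x : ℝ × ℝ, ‖fderiv ℝ (iteratedFDeriv ℝ (l+1) g) x ((0:ℝ),(1:ℝ))‖^2
      ≤ ‖iteratedFDeriv ℝ (l+2) g x‖^2 := by
    intro x
    have h := (fderiv ℝ (iteratedFDeriv ℝ (l+1) g) x).le_opNorm ((0:ℝ),(1:ℝ))
    rw [hn01, mul_one, hnF2 x] at h
    exact pow_le_pow_left₀ (norm_nonneg _) h 2
  -- continuity of various slice integrands
  have hsliceC : ∀ σ : ℝ, Continuous (fun τ : ℝ => (σ, τ)) :=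
    fun σ => continuous_const.prodMk continuous_id
  have hsliceC' : ∀ t : ℝ, Continuous (fun σ : ℝ => (σ, t)) :=
    fun t => continuous_id.prodMk continuous_const
  -- Step 2 : for every σ, J σ ≤ 2 ∫_{Ioo 0 1} W
  have hstep2 : ∀ σ : ℝ,
      ‖iteratedFDeriv ℝ l g (σ, t)‖^2 + ‖iteratedFDeriv ℝ (l+1) g (σ, t)‖^2 ≤
        2 * ∫ τ in Set.Ioo (0:ℝ) 1,
          (‖iteratedFDeriv ℝ l g (σ, τ)‖^2 + 2*‖iteratedFDeriv ℝ (l+1) g (σ, τ)‖^2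
            + ‖iteratedFDeriv ℝ (l+2) g (σ, τ)‖^2) := by
    intro σ
    have h0 := agmon1d t (fun τ => iteratedFDeriv ℝ l g (σ, τ))
      (fun τ => fderiv ℝ (iteratedFDeriv ℝ l g) (σ, τ) ((0:ℝ),(1:ℝ)))
      (fun τ _ => hasDerivAt_slice2 hdG0 σ τ)
      (((hcF1.comp (hsliceC σ)).clm_apply continuous_const).continuousOn)
    have h1 := agmon1d t (fun τ => iteratedFDeriv ℝ (l+1) g (σ, τ))
      (fun τ => fderiv ℝ (iteratedFDeriv ℝ (l+1) g) (σ, τ) ((0:ℝ),(1:ℝ)))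
      (fun τ _ => hasDerivAt_slice2 hdG1 σ τ)
      (((hcF2.comp (hsliceC σ)).clm_apply continuous_const).continuousOn)
    beta_reduce at h0 h1
    have htt : t ≤ t + 1 := by linarith
    -- monotone bounds on derivative integrals
    have hm0 : (∫ τ in t..(t+1), ‖fderiv ℝ (iteratedFDeriv ℝ l g) (σ, τ) ((0:ℝ),(1:ℝ))‖^2)
        ≤ ∫ τ in t..(t+1), ‖iteratedFDeriv ℝ (l+1) g (σ, τ)‖^2 := by
      apply intervalIntegral.integral_mono_on htt
      · exact ((((hcF1.comp (hsliceC σ)).clm_apply continuous_const).norm.pow 2)).intervalIntegrable _ _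
      · exact (((hcG1.comp (hsliceC σ)).norm.pow 2)).intervalIntegrable _ _
      · exact fun τ _ => hb0 (σ, τ)
    have hm1 : (∫ τ in t..(t+1), ‖fderiv ℝ (iteratedFDeriv ℝ (l+1) g) (σ, τ) ((0:ℝ),(1:ℝ))‖^2)
        ≤ ∫ τ in t..(t+1), ‖iteratedFDeriv ℝ (l+2) g (σ, τ)‖^2 := by
      apply intervalIntegral.integral_mono_on htt
      · exact ((((hcF2.comp (hsliceC σ)).clm_apply continuous_const).norm.pow 2)).intervalIntegrable _ _
      · exact (((hcG2.comp (hsliceC σ)).norm.pow 2)).intervalIntegrable _ _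
      · exact fun τ _ => hb1 (σ, τ)
    -- periodic shifts
    have hshift : ∀ j, j ≤ n →
        (∫ τ in t..(t+1), ‖iteratedFDeriv ℝ j g (σ, τ)‖^2)
          = ∫ τ in Set.Ioo (0:ℝ) 1, ‖iteratedFDeriv ℝ j g (σ, τ)‖^2 := by
      intro j hj
      have hper : Function.Periodic (fun τ => ‖iteratedFDeriv ℝ j g (σ, τ)‖^2) 1 := by
        intro τ
        show ‖iteratedFDeriv ℝ j g (σ, τ + 1)‖^2 = ‖iteratedFDeriv ℝ j g (σ, τ)‖^2
        rw [hperG j hj σ τ]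
      have h2 : (∫ τ in t..(t+1), ‖iteratedFDeriv ℝ j g (σ, τ)‖^2)
          = ∫ τ in (0:ℝ)..(0+1:ℝ), ‖iteratedFDeriv ℝ j g (σ, τ)‖^2 := hper.intervalIntegral_add_eq t 0
      rw [h2]
      rw [show ((0:ℝ)+1) = (1:ℝ) by norm_num]
      rw [intervalIntegral.integral_of_le (by norm_num : (0:ℝ) ≤ 1), integral_Ioc_eq_integral_Ioo]
    -- integrability on Ioo 0 1 of the three pieces
    have hi0 : IntegrableOn (fun τ => ‖iteratedFDeriv ℝ l g (σ, τ)‖^2) (Set.Ioo (0:ℝ) 1) volume :=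
      (((hcG0.comp (hsliceC σ)).norm.pow 2)).integrableOn_Ioc.mono_set Set.Ioo_subset_Ioc_self
    have hi1 : IntegrableOn (fun τ => ‖iteratedFDeriv ℝ (l+1) g (σ, τ)‖^2) (Set.Ioo (0:ℝ) 1) volume :=
      (((hcG1.comp (hsliceC σ)).norm.pow 2)).integrableOn_Ioc.mono_set Set.Ioo_subset_Ioc_self
    have hi2 : IntegrableOn (fun τ => ‖iteratedFDeriv ℝ (l+2) g (σ, τ)‖^2) (Set.Ioo (0:ℝ) 1) volume :=
      (((hcG2.comp (hsliceC σ)).norm.pow 2)).integrableOn_Ioc.mono_set Set.Ioo_subset_Ioc_self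
    have hWsplit : (∫ τ in Set.Ioo (0:ℝ) 1,
          (‖iteratedFDeriv ℝ l g (σ, τ)‖^2 + 2*‖iteratedFDeriv ℝ (l+1) g (σ, τ)‖^2
            + ‖iteratedFDeriv ℝ (l+2) g (σ, τ)‖^2))
        = (∫ τ in Set.Ioo (0:ℝ) 1, ‖iteratedFDeriv ℝ l g (σ, τ)‖^2)
          + 2*(∫ τ in Set.Ioo (0:ℝ) 1, ‖iteratedFDeriv ℝ (l+1) g (σ, τ)‖^2)
          + ∫ τ in Set.Ioo (0:ℝ) 1, ‖iteratedFDeriv ℝ (l+2) g (σ, τ)‖^2 := by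
      have hmul : IntegrableOn (fun τ => 2*‖iteratedFDeriv ℝ (l+1) g (σ, τ)‖^2)
          (Set.Ioo (0:ℝ) 1) volume := hi1.const_mul 2
      have hadd2 : IntegrableOn
          (fun τ => ‖iteratedFDeriv ℝ l g (σ, τ)‖^2 + 2*‖iteratedFDeriv ℝ (l+1) g (σ, τ)‖^2)
          (Set.Ioo (0:ℝ) 1) volume := hi0.add hmul
      rw [integral_add hadd2 hi2, integral_add hi0 hmul, integral_const_mul]
    rw [hshift l (by omega)] at h0
    rw [hshift (l+1) (by omega)] at hm0 h1
    rw [hshift (l+2) (by omega)] at hm1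
    rw [hWsplit]
    linarith [h0, h1, hm0, hm1]
  -- Step 1 : Agmon in the s-direction, with weight
  have hJcont : Continuous (fun σ : ℝ => ‖iteratedFDeriv ℝ l g (σ, t)‖^2
      + ‖iteratedFDeriv ℝ (l+1) g (σ, t)‖^2) :=
    ((hcG0.comp (hsliceC' t)).norm.pow 2).add ((hcG1.comp (hsliceC' t)).norm.pow 2)
  have hss : s ≤ s + 1 := by linarith
  have hstep1 : ‖iteratedFDeriv ℝ l g (s, t)‖^2 ≤
      2 * ∫ σ in s..(s+1), (‖iteratedFDeriv ℝ l g (σ, t)‖^2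
        + ‖iteratedFDeriv ℝ (l+1) g (σ, t)‖^2) := by
    have h0 := agmon1d s (fun σ => iteratedFDeriv ℝ l g (σ, t))
      (fun σ => fderiv ℝ (iteratedFDeriv ℝ l g) (σ, t) ((1:ℝ),(0:ℝ)))
      (fun σ _ => hasDerivAt_slice1 hdG0 t σ)
      (((hcF1.comp (hsliceC' t)).clm_apply continuous_const).continuousOn)
    beta_reduce at h0
    have hm : (∫ σ in s..(s+1), ‖fderiv ℝ (iteratedFDeriv ℝ l g) (σ, t) ((1:ℝ),(0:ℝ))‖^2)
        ≤ ∫ σ in s..(s+1), ‖iteratedFDeriv ℝ (l+1) g (σ, t)‖^2 := by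
      apply intervalIntegral.integral_mono_on hss
      · exact ((((hcF1.comp (hsliceC' t)).clm_apply continuous_const).norm.pow 2)).intervalIntegrable _ _
      · exact (((hcG1.comp (hsliceC' t)).norm.pow 2)).intervalIntegrable _ _
      · exact fun σ _ => hb0' (σ, t)
    have hadd : (∫ σ in s..(s+1), (‖iteratedFDeriv ℝ l g (σ, t)‖^2
          + ‖iteratedFDeriv ℝ (l+1) g (σ, t)‖^2))
        = (∫ σ in s..(s+1), ‖iteratedFDeriv ℝ l g (σ, t)‖^2)
          + ∫ σ in s..(s+1), ‖iteratedFDeriv ℝ (l+1) g (σ, t)‖^2 :=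
      intervalIntegral.integral_add ((((hcG0.comp (hsliceC' t)).norm.pow 2)).intervalIntegrable _ _)
        ((((hcG1.comp (hsliceC' t)).norm.pow 2)).intervalIntegrable _ _)
    rw [hadd]
    linarith
  have hexpC : Continuous (fun σ : ℝ => Real.exp (2*d*σ)) :=
    Real.continuous_exp.comp (continuous_const.mul continuous_id)
  have hweight : ‖iteratedFDeriv ℝ l g (s, t)‖^2 * Real.exp (2*d*s) ≤
      2 * ∫ σ in s..(s+1),
        (‖iteratedFDeriv ℝ l g (σ, t)‖^2 + ‖iteratedFDeriv ℝ (l+1) g (σ, t)‖^2)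
          * Real.exp (2*d*σ) := by
    have h1 : (∫ σ in s..(s+1), (‖iteratedFDeriv ℝ l g (σ, t)‖^2
            + ‖iteratedFDeriv ℝ (l+1) g (σ, t)‖^2)) * Real.exp (2*d*s)
        ≤ ∫ σ in s..(s+1),
          (‖iteratedFDeriv ℝ l g (σ, t)‖^2 + ‖iteratedFDeriv ℝ (l+1) g (σ, t)‖^2)
            * Real.exp (2*d*σ) := by
      rw [← intervalIntegral.integral_mul_const]
      apply intervalIntegral.integral_mono_on hss
      · exact (hJcont.mul continuous_const).intervalIntegrable _ _
      · exact (hJcont.mul hexpC).intervalIntegrable _ _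
      · intro σ hσ
        have he : Real.exp (2*d*s) ≤ Real.exp (2*d*σ) := by
          apply Real.exp_le_exp.mpr
          nlinarith [hσ.1]
        have hnn : (0:ℝ) ≤ ‖iteratedFDeriv ℝ l g (σ, t)‖^2
            + ‖iteratedFDeriv ℝ (l+1) g (σ, t)‖^2 := by positivity
        exact mul_le_mul_of_nonneg_left he hnn
    have h2 := mul_le_mul_of_nonneg_right hstep1 (Real.exp_nonneg (2*d*s))
    linarith
  -- the weighted grand function on the strip
  set S := Set.Ioi (0:ℝ) ×ˢ Set.Ioo (0:ℝ) 1 with hS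
  set WE : ℝ × ℝ → ℝ := fun x =>
    (‖iteratedFDeriv ℝ l g x‖^2 + 2*‖iteratedFDeriv ℝ (l+1) g x‖^2
      + ‖iteratedFDeriv ℝ (l+2) g x‖^2) * Real.exp (2*d*x.1) with hWE
  have hWEint : IntegrableOn WE S volume := by
    have h0 := hint l (by omega)
    have h1 := (hint (l+1) (by omega)).const_mul 2
    have h2 := hint (l+2) (by omega)
    have heq : WE = fun x => (‖iteratedFDeriv ℝ l g x‖^2 * Real.exp (2*d*x.1)
        + (2*(‖iteratedFDeriv ℝ (l+1) g x‖^2 * Real.exp (2*d*x.1))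
          + ‖iteratedFDeriv ℝ (l+2) g x‖^2 * Real.exp (2*d*x.1))) := by
      funext x; simp only [hWE]; ring
    rw [heq]
    exact h0.add (h1.add h2)
  have hsub1 : Set.Ioc s (s+1) ⊆ Set.Ioi (0:ℝ) := fun σ hσ => lt_trans hs hσ.1
  have hsubset : Set.Ioc s (s+1) ×ˢ Set.Ioo (0:ℝ) 1 ⊆ S := Set.prod_mono hsub1 subset_rfl
  have hWEint' : IntegrableOn WE (Set.Ioc s (s+1) ×ˢ Set.Ioo (0:ℝ) 1) volume :=
    hWEint.mono_set hsubset
  have hparam : IntegrableOn (fun σ => ∫ τ in Set.Ioo (0:ℝ) 1, WE (σ, τ))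
      (Set.Ioc s (s+1)) volume := by
    have h := hWEint'
    rw [IntegrableOn, Measure.volume_eq_prod, ← Measure.prod_restrict] at h
    exact h.integral_prod_left
  have hfub : (∫ σ in Set.Ioc s (s+1), ∫ τ in Set.Ioo (0:ℝ) 1, WE (σ, τ))
      = ∫ x in Set.Ioc s (s+1) ×ˢ Set.Ioo (0:ℝ) 1, WE x := by
    have h := hWEint'
    rw [IntegrableOn, Measure.volume_eq_prod] at h
    rw [Measure.volume_eq_prod ℝ ℝ]
    exact (setIntegral_prod WE h).symm
  have hchain : (∫ σ in s..(s+1),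
        (‖iteratedFDeriv ℝ l g (σ, t)‖^2 + ‖iteratedFDeriv ℝ (l+1) g (σ, t)‖^2)
          * Real.exp (2*d*σ))
      ≤ 2 * ∫ x in S, WE x := by
    rw [intervalIntegral.integral_of_le hss]
    have hstep : ∀ σ ∈ Set.Ioc s (s+1),
        (‖iteratedFDeriv ℝ l g (σ, t)‖^2 + ‖iteratedFDeriv ℝ (l+1) g (σ, t)‖^2)
          * Real.exp (2*d*σ)
          ≤ 2 * ∫ τ in Set.Ioo (0:ℝ) 1, WE (σ, τ) := by
      intro σ _
      have hWeq : (∫ τ in Set.Ioo (0:ℝ) 1, WE (σ, τ))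
          = (∫ τ in Set.Ioo (0:ℝ) 1, (‖iteratedFDeriv ℝ l g (σ, τ)‖^2
            + 2*‖iteratedFDeriv ℝ (l+1) g (σ, τ)‖^2
            + ‖iteratedFDeriv ℝ (l+2) g (σ, τ)‖^2))
              * Real.exp (2*d*σ) := by
        simp only [hWE]
        exact integral_mul_const _ _
      have h2 := mul_le_mul_of_nonneg_right (hstep2 σ) (Real.exp_nonneg (2*d*σ))
      rw [hWeq]
      linarith
    calc ∫ σ in Set.Ioc s (s+1),
          (‖iteratedFDeriv ℝ l g (σ, t)‖^2 + ‖iteratedFDeriv ℝ (l+1) g (σ, t)‖^2)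
            * Real.exp (2*d*σ)
        ≤ ∫ σ in Set.Ioc s (s+1), 2 * ∫ τ in Set.Ioo (0:ℝ) 1, WE (σ, τ) := by
          apply setIntegral_mono_on
          · exact (hJcont.mul hexpC).integrableOn_Ioc
          · exact hparam.const_mul 2
          · exact measurableSet_Ioc
          · exact hstep
      _ = 2 * ∫ σ in Set.Ioc s (s+1), ∫ τ in Set.Ioo (0:ℝ) 1, WE (σ, τ) :=
          integral_const_mul 2 _
      _ = 2 * ∫ x in Set.Ioc s (s+1) ×ˢ Set.Ioo (0:ℝ) 1, WE x := by rw [hfub]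
      _ ≤ 2 * ∫ x in S, WE x := by
          have hmono := setIntegral_mono_set hWEint
            (Filter.Eventually.of_forall (fun x => by
              simp only [hWE]; positivity))
            (HasSubset.Subset.eventuallyLE hsubset)
          linarith
  have hnn : ∀ j : ℕ, 0 ≤ ∫ x in S, ‖iteratedFDeriv ℝ j g x‖^2 * Real.exp (2*d*x.1) := by
    intro j
    apply setIntegral_nonneg (measurableSet_Ioi.prod measurableSet_Ioo)
    intro x _; positivity
  have hWEeq : (∫ x in S, WE x)
      = (∫ x in S, ‖iteratedFDeriv ℝ l g x‖^2 * Real.exp (2*d*x.1))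
        + 2*(∫ x in S, ‖iteratedFDeriv ℝ (l+1) g x‖^2 * Real.exp (2*d*x.1))
        + ∫ x in S, ‖iteratedFDeriv ℝ (l+2) g x‖^2 * Real.exp (2*d*x.1) := by
    have h0 := hint l (by omega)
    have h2 := hint (l+2) (by omega)
    have hmul : IntegrableOn (fun x : ℝ×ℝ =>
        2*(‖iteratedFDeriv ℝ (l+1) g x‖^2 * Real.exp (2*d*x.1))) S volume :=
      (hint (l+1) (by omega)).const_mul 2
    have hadd2 : IntegrableOn (fun x : ℝ×ℝ =>
        ‖iteratedFDeriv ℝ l g x‖^2 * Real.exp (2*d*x.1)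
          + 2*(‖iteratedFDeriv ℝ (l+1) g x‖^2 * Real.exp (2*d*x.1))) S volume :=
      h0.add hmul
    have heq : WE = fun x => (‖iteratedFDeriv ℝ l g x‖^2 * Real.exp (2*d*x.1)
        + 2*(‖iteratedFDeriv ℝ (l+1) g x‖^2 * Real.exp (2*d*x.1)))
        + ‖iteratedFDeriv ℝ (l+2) g x‖^2 * Real.exp (2*d*x.1) := by
      funext x; simp only [hWE]; ring
    rw [heq, integral_add hadd2 h2, integral_add h0 hmul, integral_const_mul]
  have hsum3 : (∫ x in S, ‖iteratedFDeriv ℝ l g x‖^2 * Real.exp (2*d*x.1))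
      + ((∫ x in S, ‖iteratedFDeriv ℝ (l+1) g x‖^2 * Real.exp (2*d*x.1))
      + (∫ x in S, ‖iteratedFDeriv ℝ (l+2) g x‖^2 * Real.exp (2*d*x.1)))
      ≤ ∑ j ∈ Finset.range (n + 1),
          ∫ x in S, ‖iteratedFDeriv ℝ j g x‖^2 * Real.exp (2*d*x.1) := by
    have hsub : ({l, l+1, l+2} : Finset ℕ) ⊆ Finset.range (n+1) := by
      intro x hx
      simp only [Finset.mem_insert, Finset.mem_singleton] at hx
      simp only [Finset.mem_range]
      rcases hx with h|h|h <;> omega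
    have heq3 : (∑ j ∈ ({l, l+1, l+2} : Finset ℕ),
        ∫ x in S, ‖iteratedFDeriv ℝ j g x‖^2 * Real.exp (2*d*x.1))
        = (∫ x in S, ‖iteratedFDeriv ℝ l g x‖^2 * Real.exp (2*d*x.1))
          + ((∫ x in S, ‖iteratedFDeriv ℝ (l+1) g x‖^2 * Real.exp (2*d*x.1))
          + (∫ x in S, ‖iteratedFDeriv ℝ (l+2) g x‖^2 * Real.exp (2*d*x.1))) := by
      rw [Finset.sum_insert (by simp only [Finset.mem_insert, Finset.mem_singleton]; omega),
        Finset.sum_insert (by simp only [Finset.mem_singleton]; omega),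
        Finset.sum_singleton]
    rw [← heq3]
    exact Finset.sum_le_sum_of_subset_of_nonneg hsub (fun j _ _ => hnn j)
  have hfinal : ∫ x in S, WE x ≤ 2 * ∑ j ∈ Finset.range (n + 1),
      ∫ x in S, ‖iteratedFDeriv ℝ j g x‖^2 * Real.exp (2*d*x.1) := by
    rw [hWEeq]
    linarith [hnn l, hnn (l+1), hnn (l+2), hsum3]
  linarith [hweight, hchain, hfinal]


/-- square of the exponentially weighted Sobolev norm
`‖f‖²_{k,δ} = ∑_{|α|≤k} ∫_{ℝ⁺×S¹} |D^α f|² e^{2δs}` on the half-cylinder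
(functions on `ℝ²`, 1-periodic in the second variable) -/
def wNormSq (k : ℕ) (δ : ℝ) (f : ℝ × ℝ → ℝ) : ℝ :=
  ∑ j ∈ Finset.range (k + 1),
    ∫ x in Set.Ioi (0 : ℝ) ×ˢ Set.Ioo (0 : ℝ) 1,
      ‖iteratedFDeriv ℝ j f x‖ ^ 2 * Real.exp (2 * δ * x.1)

/-- membership in `H^{k,δ}(ℝ⁺ × S¹)` (smooth representatives) -/
def memW (k : ℕ) (δ : ℝ) (f : ℝ × ℝ → ℝ) : Prop :=
  ContDiff ℝ (k : ℕ∞) f ∧ (∀ s t : ℝ, f (s, t + 1) = f (s, t)) ∧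
    ∀ j ≤ k, IntegrableOn
      (fun x => ‖iteratedFDeriv ℝ j f x‖ ^ 2 * Real.exp (2 * δ * x.1))
      (Set.Ioi (0 : ℝ) ×ˢ Set.Ioo (0 : ℝ) 1)

lemma measS : MeasurableSet (Set.Ioi (0:ℝ) ×ˢ Set.Ioo (0:ℝ) 1) :=
  measurableSet_Ioi.prod measurableSet_Ioo

lemma expC (c : ℝ) : Continuous (fun x : ℝ × ℝ => Real.exp (2*c*x.1)) :=
  Real.continuous_exp.comp (continuous_const.mul continuous_fst)

lemma wNormSq_nonneg (k : ℕ) (δ : ℝ) (f : ℝ × ℝ → ℝ) : 0 ≤ wNormSq k δ f :=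
  Finset.sum_nonneg (fun j _ => setIntegral_nonneg measS (fun x _ => by positivity))

lemma prod_term_bound (m k : ℕ) (δ σ : ℝ) (hm : 3 ≤ m) (hk : 2 ≤ k) (hkm : k ≤ m)
    (hσ : 0 ≤ σ) (hσδ : σ ≤ δ) (f g : ℝ × ℝ → ℝ)
    (hf : memW m δ f) (hg : memW k σ g) (j : ℕ) (hjk : j ≤ k) :
    (∫ x in Set.Ioi (0:ℝ) ×ˢ Set.Ioo (0:ℝ) 1,
        ‖iteratedFDeriv ℝ j (fun y => f y * g y) x‖^2 * Real.exp (2*δ*x.1))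
      ≤ 16 * ((j+1:ℝ) * ∑ i ∈ Finset.range (j+1), ((j.choose i : ℝ))^2)
          * (wNormSq m δ f * wNormSq k σ g) := by
  obtain ⟨hfc, hfper, hfint⟩ := hf
  obtain ⟨hgc, hgper, hgint⟩ := hg
  have hMf0 : 0 ≤ wNormSq m δ f := wNormSq_nonneg m δ f
  have hMg0 : 0 ≤ wNormSq k σ g := wNormSq_nonneg k σ g
  -- sup bound for g with weight σ
  have hgsup : ∀ l : ℕ, l + 2 ≤ k → ∀ x : ℝ × ℝ,
      x ∈ Set.Ioi (0:ℝ) ×ˢ Set.Ioo (0:ℝ) 1 →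
      ‖iteratedFDeriv ℝ l g x‖^2 * Real.exp (2*σ*x.1) ≤ 8 * wNormSq k σ g := by
    intro l hlk x hx
    have h := sup_bound k l hlk σ hσ g hgc hgper (fun j' hj' => hgint j' hj') x.1 x.2 hx.1
    rw [Prod.mk.eta] at h
    exact h
  -- integrability of f-terms with weight δ - σ
  have hfint' : ∀ j' ≤ m, IntegrableOn
      (fun x : ℝ × ℝ => ‖iteratedFDeriv ℝ j' f x‖^2 * Real.exp (2*(δ-σ)*x.1))
      (Set.Ioi (0:ℝ) ×ˢ Set.Ioo (0:ℝ) 1) volume := by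
    intro j' hj'
    refine (hfint j' hj').mono' ?_ ?_
    · exact (((hfc.continuous_iteratedFDeriv (Nat.cast_le.mpr hj')).norm.pow 2).mul
        (expC (δ-σ))).aestronglyMeasurable.restrict
    · refine (ae_restrict_iff' measS).mpr (Filter.Eventually.of_forall ?_)
      intro x hx
      have hx1 : 0 < x.1 := hx.1
      rw [Real.norm_eq_abs, abs_of_nonneg (by positivity)]
      refine mul_le_mul_of_nonneg_left ?_ (by positivity)
      exact Real.exp_le_exp.mpr (by nlinarith)
  -- sup bound for f with weight δ - σ
  have hfsup : ∀ l : ℕ, l + 2 ≤ m → ∀ x : ℝ × ℝ,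
      x ∈ Set.Ioi (0:ℝ) ×ˢ Set.Ioo (0:ℝ) 1 →
      ‖iteratedFDeriv ℝ l f x‖^2 * Real.exp (2*(δ-σ)*x.1) ≤ 8 * wNormSq m δ f := by
    intro l hlm x hx
    have h := sup_bound m l hlm (δ-σ) (by linarith) f hfc hfper hfint' x.1 x.2 hx.1
    rw [Prod.mk.eta] at h
    refine le_trans h ?_
    have hmono : (∑ j' ∈ Finset.range (m+1), ∫ x in Set.Ioi (0:ℝ) ×ˢ Set.Ioo (0:ℝ) 1,
          ‖iteratedFDeriv ℝ j' f x‖^2 * Real.exp (2*(δ-σ)*x.1))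
        ≤ ∑ j' ∈ Finset.range (m+1), ∫ x in Set.Ioi (0:ℝ) ×ˢ Set.Ioo (0:ℝ) 1,
          ‖iteratedFDeriv ℝ j' f x‖^2 * Real.exp (2*δ*x.1) := by
      refine Finset.sum_le_sum (fun j' hj' => ?_)
      refine setIntegral_mono_on (hfint' j' (by
        have := Finset.mem_range.mp hj'; omega)) (hfint j' (by
        have := Finset.mem_range.mp hj'; omega)) measS ?_
      intro x hx
      have hx1 : 0 < x.1 := hx.1
      refine mul_le_mul_of_nonneg_left ?_ (by positivity)
      exact Real.exp_le_exp.mpr (by nlinarith)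
    have hMfeq : wNormSq m δ f = ∑ j' ∈ Finset.range (m+1),
        ∫ x in Set.Ioi (0:ℝ) ×ˢ Set.Ioo (0:ℝ) 1,
          ‖iteratedFDeriv ℝ j' f x‖^2 * Real.exp (2*δ*x.1) := rfl
    rw [hMfeq]
    linarith
  -- continuity of the product and integrands
  have hcfg : ContDiff ℝ (k : ℕ∞) (fun y => f y * g y) :=
    (hfc.of_le (Nat.cast_le.mpr hkm)).mul hgc
  have hPcont : Continuous (fun x : ℝ × ℝ =>
      ‖iteratedFDeriv ℝ j (fun y => f y * g y) x‖^2 * Real.exp (2*δ*x.1)) :=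
    ((hcfg.continuous_iteratedFDeriv (Nat.cast_le.mpr hjk)).norm.pow 2).mul (expC δ)
  -- the majorant
  have hFf_int : IntegrableOn (fun x : ℝ × ℝ => ∑ i' ∈ Finset.range (m+1),
      ‖iteratedFDeriv ℝ i' f x‖^2 * Real.exp (2*δ*x.1))
      (Set.Ioi (0:ℝ) ×ˢ Set.Ioo (0:ℝ) 1) volume :=
    integrable_finset_sum _ (fun i' hi' => hfint i' (by
      have := Finset.mem_range.mp hi'; omega))
  have hGg_int : IntegrableOn (fun x : ℝ × ℝ => ∑ i' ∈ Finset.range (k+1),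
      ‖iteratedFDeriv ℝ i' g x‖^2 * Real.exp (2*σ*x.1))
      (Set.Ioi (0:ℝ) ×ˢ Set.Ioo (0:ℝ) 1) volume :=
    integrable_finset_sum _ (fun i' hi' => hgint i' (by
      have := Finset.mem_range.mp hi'; omega))
  have hFf_eq : (∫ x in Set.Ioi (0:ℝ) ×ˢ Set.Ioo (0:ℝ) 1,
      ∑ i' ∈ Finset.range (m+1), ‖iteratedFDeriv ℝ i' f x‖^2 * Real.exp (2*δ*x.1))
      = wNormSq m δ f := by
    rw [integral_finset_sum _ (fun i' hi' => hfint i' (by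
      have := Finset.mem_range.mp hi'; omega))]
    rfl
  have hGg_eq : (∫ x in Set.Ioi (0:ℝ) ×ˢ Set.Ioo (0:ℝ) 1,
      ∑ i' ∈ Finset.range (k+1), ‖iteratedFDeriv ℝ i' g x‖^2 * Real.exp (2*σ*x.1))
      = wNormSq k σ g := by
    rw [integral_finset_sum _ (fun i' hi' => hgint i' (by
      have := Finset.mem_range.mp hi'; omega))]
    rfl
  have hHint : IntegrableOn (fun x : ℝ × ℝ =>
      8 * wNormSq k σ g * (∑ i' ∈ Finset.range (m+1),
        ‖iteratedFDeriv ℝ i' f x‖^2 * Real.exp (2*δ*x.1))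
      + 8 * wNormSq m δ f * (∑ i' ∈ Finset.range (k+1),
        ‖iteratedFDeriv ℝ i' g x‖^2 * Real.exp (2*σ*x.1)))
      (Set.Ioi (0:ℝ) ×ˢ Set.Ioo (0:ℝ) 1) volume :=
    (hFf_int.const_mul _).add (hGg_int.const_mul _)
  have hHeq : (∫ x in Set.Ioi (0:ℝ) ×ˢ Set.Ioo (0:ℝ) 1,
      (8 * wNormSq k σ g * (∑ i' ∈ Finset.range (m+1),
        ‖iteratedFDeriv ℝ i' f x‖^2 * Real.exp (2*δ*x.1))
      + 8 * wNormSq m δ f * (∑ i' ∈ Finset.range (k+1),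
        ‖iteratedFDeriv ℝ i' g x‖^2 * Real.exp (2*σ*x.1))))
      = 8 * wNormSq k σ g * wNormSq m δ f + 8 * wNormSq m δ f * wNormSq k σ g := by
    rw [integral_add (hFf_int.const_mul _) (hGg_int.const_mul _),
      integral_const_mul, integral_const_mul, hFf_eq, hGg_eq]
  -- pointwise bound
  have hcore : ∀ x ∈ Set.Ioi (0:ℝ) ×ˢ Set.Ioo (0:ℝ) 1,
      ‖iteratedFDeriv ℝ j (fun y => f y * g y) x‖^2 * Real.exp (2*δ*x.1)
      ≤ ((j+1:ℝ) * ∑ i ∈ Finset.range (j+1), ((j.choose i : ℝ))^2)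
        * (8 * wNormSq k σ g * (∑ i' ∈ Finset.range (m+1),
            ‖iteratedFDeriv ℝ i' f x‖^2 * Real.exp (2*δ*x.1))
          + 8 * wNormSq m δ f * (∑ i' ∈ Finset.range (k+1),
            ‖iteratedFDeriv ℝ i' g x‖^2 * Real.exp (2*σ*x.1))) := by
    intro x hx
    have hx1 : 0 < x.1 := hx.1
    have hFf0 : 0 ≤ ∑ i' ∈ Finset.range (m+1),
        ‖iteratedFDeriv ℝ i' f x‖^2 * Real.exp (2*δ*x.1) :=
      Finset.sum_nonneg (fun i' _ => by positivity)
    have hGg0 : 0 ≤ ∑ i' ∈ Finset.range (k+1),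
        ‖iteratedFDeriv ℝ i' g x‖^2 * Real.exp (2*σ*x.1) :=
      Finset.sum_nonneg (fun i' _ => by positivity)
    have ha := norm_iteratedFDeriv_mul_le (𝕜 := ℝ)
      (hfc.of_le (Nat.cast_le.mpr hkm)) hgc x (Nat.cast_le.mpr hjk)
    have hcs := Finset.sum_mul_sq_le_sq_mul_sq (Finset.range (j+1)) (fun _ => (1:ℝ))
      (fun i => (j.choose i : ℝ) * ‖iteratedFDeriv ℝ i f x‖ * ‖iteratedFDeriv ℝ (j-i) g x‖)
    simp only [one_mul, one_pow, Finset.sum_const, Finset.card_range, nsmul_eq_mul, mul_one] at hcs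
    have hsq : ‖iteratedFDeriv ℝ j (fun y => f y * g y) x‖^2
        ≤ (j+1 : ℝ) * ∑ i ∈ Finset.range (j+1),
          ((j.choose i : ℝ) * ‖iteratedFDeriv ℝ i f x‖ * ‖iteratedFDeriv ℝ (j-i) g x‖)^2 := by
      refine le_trans (pow_le_pow_left₀ (norm_nonneg _) ha 2) ?_
      exact_mod_cast hcs
    have hterm : ∀ i ∈ Finset.range (j+1),
        ((j.choose i : ℝ) * ‖iteratedFDeriv ℝ i f x‖ * ‖iteratedFDeriv ℝ (j-i) g x‖)^2
          * Real.exp (2*δ*x.1)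
        ≤ ((j.choose i : ℝ))^2
          * (8 * wNormSq k σ g * (∑ i' ∈ Finset.range (m+1),
              ‖iteratedFDeriv ℝ i' f x‖^2 * Real.exp (2*δ*x.1))
            + 8 * wNormSq m δ f * (∑ i' ∈ Finset.range (k+1),
              ‖iteratedFDeriv ℝ i' g x‖^2 * Real.exp (2*σ*x.1))) := by
      intro i hi
      have hi' : i ≤ j := by
        have := Finset.mem_range.mp hi; omega
      have hFi : ‖iteratedFDeriv ℝ i f x‖^2 * Real.exp (2*δ*x.1)
          ≤ ∑ i' ∈ Finset.range (m+1), ‖iteratedFDeriv ℝ i' f x‖^2 * Real.exp (2*δ*x.1) :=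
        Finset.single_le_sum (f := fun i' =>
          ‖iteratedFDeriv ℝ i' f x‖^2 * Real.exp (2*δ*x.1))
          (fun i' _ => by positivity) (Finset.mem_range.mpr (by omega))
      have hGi : ‖iteratedFDeriv ℝ (j-i) g x‖^2 * Real.exp (2*σ*x.1)
          ≤ ∑ i' ∈ Finset.range (k+1), ‖iteratedFDeriv ℝ i' g x‖^2 * Real.exp (2*σ*x.1) :=
        Finset.single_le_sum (f := fun i' =>
          ‖iteratedFDeriv ℝ i' g x‖^2 * Real.exp (2*σ*x.1))
          (fun i' _ => by positivity) (Finset.mem_range.mpr (by omega))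
      have hsplit : Real.exp (2*δ*x.1) = Real.exp (2*(δ-σ)*x.1) * Real.exp (2*σ*x.1) := by
        rw [← Real.exp_add]; ring_nf
      have hkey : ‖iteratedFDeriv ℝ i f x‖^2 * ‖iteratedFDeriv ℝ (j-i) g x‖^2
            * Real.exp (2*δ*x.1)
          ≤ 8 * wNormSq k σ g * (∑ i' ∈ Finset.range (m+1),
              ‖iteratedFDeriv ℝ i' f x‖^2 * Real.exp (2*δ*x.1))
            + 8 * wNormSq m δ f * (∑ i' ∈ Finset.range (k+1),
              ‖iteratedFDeriv ℝ i' g x‖^2 * Real.exp (2*σ*x.1)) := by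
        by_cases hcase : j - i + 2 ≤ k
        · have hgs := hgsup (j-i) hcase x hx
          have hfe : ‖iteratedFDeriv ℝ i f x‖^2 * Real.exp (2*(δ-σ)*x.1)
              ≤ ∑ i' ∈ Finset.range (m+1),
                ‖iteratedFDeriv ℝ i' f x‖^2 * Real.exp (2*δ*x.1) := by
            refine le_trans ?_ hFi
            refine mul_le_mul_of_nonneg_left ?_ (by positivity)
            exact Real.exp_le_exp.mpr (by nlinarith)
          have heq1 : ‖iteratedFDeriv ℝ i f x‖^2 * ‖iteratedFDeriv ℝ (j-i) g x‖^2
                * Real.exp (2*δ*x.1)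
              = (‖iteratedFDeriv ℝ i f x‖^2 * Real.exp (2*(δ-σ)*x.1))
                * (‖iteratedFDeriv ℝ (j-i) g x‖^2 * Real.exp (2*σ*x.1)) := by
            rw [hsplit]; ring
          rw [heq1]
          have h1 : (‖iteratedFDeriv ℝ i f x‖^2 * Real.exp (2*(δ-σ)*x.1))
                * (‖iteratedFDeriv ℝ (j-i) g x‖^2 * Real.exp (2*σ*x.1))
              ≤ (∑ i' ∈ Finset.range (m+1),
                  ‖iteratedFDeriv ℝ i' f x‖^2 * Real.exp (2*δ*x.1)) * (8 * wNormSq k σ g) :=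
            mul_le_mul hfe hgs (by positivity) hFf0
          nlinarith [mul_nonneg (mul_nonneg (by norm_num : (0:ℝ) ≤ 8) hMf0) hGg0]
        · have him : i + 2 ≤ m := by omega
          have hfs := hfsup i him x hx
          have heq1 : ‖iteratedFDeriv ℝ i f x‖^2 * ‖iteratedFDeriv ℝ (j-i) g x‖^2
                * Real.exp (2*δ*x.1)
              = (‖iteratedFDeriv ℝ i f x‖^2 * Real.exp (2*(δ-σ)*x.1))
                * (‖iteratedFDeriv ℝ (j-i) g x‖^2 * Real.exp (2*σ*x.1)) := by
            rw [hsplit]; ring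
          rw [heq1]
          have h1 : (‖iteratedFDeriv ℝ i f x‖^2 * Real.exp (2*(δ-σ)*x.1))
                * (‖iteratedFDeriv ℝ (j-i) g x‖^2 * Real.exp (2*σ*x.1))
              ≤ (8 * wNormSq m δ f) * (∑ i' ∈ Finset.range (k+1),
                  ‖iteratedFDeriv ℝ i' g x‖^2 * Real.exp (2*σ*x.1)) :=
            mul_le_mul hfs hGi (by positivity) (by positivity)
          nlinarith [mul_nonneg (mul_nonneg (by norm_num : (0:ℝ) ≤ 8) hMg0) hFf0]
      calc ((j.choose i : ℝ) * ‖iteratedFDeriv ℝ i f x‖ * ‖iteratedFDeriv ℝ (j-i) g x‖)^2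
            * Real.exp (2*δ*x.1)
          = ((j.choose i : ℝ))^2 * (‖iteratedFDeriv ℝ i f x‖^2
              * ‖iteratedFDeriv ℝ (j-i) g x‖^2 * Real.exp (2*δ*x.1)) := by ring
        _ ≤ _ := mul_le_mul_of_nonneg_left hkey (by positivity)
    calc ‖iteratedFDeriv ℝ j (fun y => f y * g y) x‖^2 * Real.exp (2*δ*x.1)
        ≤ ((j+1 : ℝ) * ∑ i ∈ Finset.range (j+1),
            ((j.choose i : ℝ) * ‖iteratedFDeriv ℝ i f x‖ * ‖iteratedFDeriv ℝ (j-i) g x‖)^2)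
              * Real.exp (2*δ*x.1) :=
          mul_le_mul_of_nonneg_right hsq (Real.exp_nonneg _)
      _ = (j+1 : ℝ) * ∑ i ∈ Finset.range (j+1),
            (((j.choose i : ℝ) * ‖iteratedFDeriv ℝ i f x‖ * ‖iteratedFDeriv ℝ (j-i) g x‖)^2
              * Real.exp (2*δ*x.1)) := by
          rw [mul_assoc, Finset.sum_mul]
      _ ≤ (j+1 : ℝ) * ∑ i ∈ Finset.range (j+1), (((j.choose i : ℝ))^2
            * (8 * wNormSq k σ g * (∑ i' ∈ Finset.range (m+1),
                ‖iteratedFDeriv ℝ i' f x‖^2 * Real.exp (2*δ*x.1))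
              + 8 * wNormSq m δ f * (∑ i' ∈ Finset.range (k+1),
                ‖iteratedFDeriv ℝ i' g x‖^2 * Real.exp (2*σ*x.1)))) :=
          mul_le_mul_of_nonneg_left (Finset.sum_le_sum hterm) (by positivity)
      _ = _ := by
          rw [← Finset.sum_mul]; ring
  -- integrability of the product integrand
  have hPint : IntegrableOn (fun x : ℝ × ℝ =>
      ‖iteratedFDeriv ℝ j (fun y => f y * g y) x‖^2 * Real.exp (2*δ*x.1))
      (Set.Ioi (0:ℝ) ×ˢ Set.Ioo (0:ℝ) 1) volume := by
    refine (hHint.const_mul ((j+1:ℝ) * ∑ i ∈ Finset.range (j+1),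
      ((j.choose i : ℝ))^2)).mono' hPcont.aestronglyMeasurable.restrict ?_
    refine (ae_restrict_iff' measS).mpr (Filter.Eventually.of_forall ?_)
    intro x hx
    rw [Real.norm_eq_abs, abs_of_nonneg (by positivity)]
    exact hcore x hx
  have hst1 : (∫ x in Set.Ioi (0:ℝ) ×ˢ Set.Ioo (0:ℝ) 1,
        ‖iteratedFDeriv ℝ j (fun y => f y * g y) x‖^2 * Real.exp (2*δ*x.1))
      ≤ ∫ x in Set.Ioi (0:ℝ) ×ˢ Set.Ioo (0:ℝ) 1,
          ((j+1:ℝ) * ∑ i ∈ Finset.range (j+1), ((j.choose i : ℝ))^2)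
          * (8 * wNormSq k σ g * (∑ i' ∈ Finset.range (m+1),
              ‖iteratedFDeriv ℝ i' f x‖^2 * Real.exp (2*δ*x.1))
            + 8 * wNormSq m δ f * (∑ i' ∈ Finset.range (k+1),
              ‖iteratedFDeriv ℝ i' g x‖^2 * Real.exp (2*σ*x.1))) :=
    setIntegral_mono_on hPint (hHint.const_mul _) measS hcore
  have hst2 : (∫ x in Set.Ioi (0:ℝ) ×ˢ Set.Ioo (0:ℝ) 1,
          ((j+1:ℝ) * ∑ i ∈ Finset.range (j+1), ((j.choose i : ℝ))^2)
          * (8 * wNormSq k σ g * (∑ i' ∈ Finset.range (m+1),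
              ‖iteratedFDeriv ℝ i' f x‖^2 * Real.exp (2*δ*x.1))
            + 8 * wNormSq m δ f * (∑ i' ∈ Finset.range (k+1),
              ‖iteratedFDeriv ℝ i' g x‖^2 * Real.exp (2*σ*x.1))))
      = ((j+1:ℝ) * ∑ i ∈ Finset.range (j+1), ((j.choose i : ℝ))^2)
        * (8 * wNormSq k σ g * wNormSq m δ f + 8 * wNormSq m δ f * wNormSq k σ g) := by
    rw [integral_const_mul, hHeq]
  refine le_trans hst1 (le_of_eq ?_)
  rw [hst2]
  ring


/-!
STATEMENT 14. Let `m ≥ 3`, `2 ≤ k ≤ m`, and `0 ≤ σ ≤ δ`.  There exists a constant `C`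
such that `‖f·g‖_{k,δ} ≤ C·‖f‖_{m,δ}·‖g‖_{k,σ}` for all `f ∈ H^{m,δ}(ℝ⁺×S¹)` and
`g ∈ H^{k,σ}(ℝ⁺×S¹)`.
-/
theorem weighted_sobolev_banach_algebra
    (m k : ℕ) (δ σ : ℝ) (hm : 3 ≤ m) (hk : 2 ≤ k) (hkm : k ≤ m)
    (hσ : 0 ≤ σ) (hσδ : σ ≤ δ) :
    ∃ C : ℝ, ∀ f g : ℝ × ℝ → ℝ, memW m δ f → memW k σ g →
      Real.sqrt (wNormSq k δ (fun x => f x * g x))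
        ≤ C * Real.sqrt (wNormSq m δ f) * Real.sqrt (wNormSq k σ g) := by
  refine ⟨Real.sqrt (∑ j ∈ Finset.range (k+1),
    16 * ((j+1:ℝ) * ∑ i ∈ Finset.range (j+1), ((j.choose i : ℝ))^2)), ?_⟩
  intro f g hf hg
  have hK0 : 0 ≤ ∑ j ∈ Finset.range (k+1),
      16 * ((j+1:ℝ) * ∑ i ∈ Finset.range (j+1), ((j.choose i : ℝ))^2) :=
    Finset.sum_nonneg (fun j _ => by positivity)
  have hMf0 := wNormSq_nonneg m δ f
  have hMg0 := wNormSq_nonneg k σ g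
  have hmain : wNormSq k δ (fun x => f x * g x)
      ≤ (∑ j ∈ Finset.range (k+1),
          16 * ((j+1:ℝ) * ∑ i ∈ Finset.range (j+1), ((j.choose i : ℝ))^2))
        * (wNormSq m δ f * wNormSq k σ g) := by
    have h1 : wNormSq k δ (fun x => f x * g x)
        = ∑ j ∈ Finset.range (k+1), ∫ x in Set.Ioi (0:ℝ) ×ˢ Set.Ioo (0:ℝ) 1,
            ‖iteratedFDeriv ℝ j (fun y => f y * g y) x‖^2 * Real.exp (2*δ*x.1) := rfl
    rw [h1, Finset.sum_mul]
    refine Finset.sum_le_sum (fun j hj => ?_)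
    exact prod_term_bound m k δ σ hm hk hkm hσ hσδ f g hf hg j
      (by have := Finset.mem_range.mp hj; omega)
  calc Real.sqrt (wNormSq k δ (fun x => f x * g x))
      ≤ Real.sqrt ((∑ j ∈ Finset.range (k+1),
          16 * ((j+1:ℝ) * ∑ i ∈ Finset.range (j+1), ((j.choose i : ℝ))^2))
        * (wNormSq m δ f * wNormSq k σ g)) := Real.sqrt_le_sqrt hmain
    _ = Real.sqrt (∑ j ∈ Finset.range (k+1),
          16 * ((j+1:ℝ) * ∑ i ∈ Finset.range (j+1), ((j.choose i : ℝ))^2))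
        * (Real.sqrt (wNormSq m δ f) * Real.sqrt (wNormSq k σ g)) := by
        rw [Real.sqrt_mul hK0, Real.sqrt_mul hMf0]
    _ = _ := by ring
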